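/- Let d ≥ 1, let β₁, β₂, … ∈ (0,1), set ᾱ_T = ∏_{t=1}^{T} (1−β_t), and let x₀, x₀' ∈ ℝ^d with x₀ ≠ x₀'. For any measurable space 𝒴 and any Markov kernel κ from ℝ^d to 𝒴 (modeling the reverse denoising process composed with the classifier), KL( (N(√ᾱ_T·x₀, (1−ᾱ_T)·I_d)).bind κ ‖ (N(√ᾱ_T·x₀', (1−ᾱ_T)·I_d)).bind κ ) ≤ ᾱ_T·‖x₀ − x₀'‖₂² / (2·(1−ᾱ_T)), and the right-hand side is strictly decreasing in T. -/

import Mathlib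

set_option maxHeartbeats 1000000

open MeasureTheory ProbabilityTheory Real
open scoped ENNReal NNReal RealInnerProductSpace

/-- The Gaussian probability measure `N(m, σ² I_d)` on `ℝ^d`, given by its Lebesgue density. -/
noncomputable def gaussian (d : ℕ) (m : EuclideanSpace ℝ (Fin d)) (σ2 : ℝ) :
    Measure (EuclideanSpace ℝ (Fin d)) :=
  volume.withDensity fun x => ENNReal.ofReal
    ((2 * π * σ2) ^ (-(d : ℝ) / 2) * Real.exp (-‖x - m‖ ^ 2 / (2 * σ2)))

/-- The Kullback–Leibler divergence `KL(P‖Q) = ∫ log (dP/dQ) dP`. -/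
noncomputable def KLdiv {X : Type*} [MeasurableSpace X] (P Q : Measure X) : ℝ :=
  ∫ x, Real.log ((P.rnDeriv Q) x).toReal ∂P

variable {d : ℕ}

local notation "E" => EuclideanSpace ℝ (Fin d)

lemma integrable_gauss {b : ℝ} (hb : 0 < b) :
    Integrable (fun x : E => rexp (-b * ‖x‖ ^ 2)) := by
  have h := (GaussianFourier.integrable_cexp_neg_mul_sq_norm_add (V := E)
    (b := (b : ℂ)) (by simpa using hb) 0 0).norm
  refine h.congr (ae_of_all _ fun x => ?_)
  simp only [Complex.norm_exp]
  congr 1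
  simp only [Complex.add_re, Complex.neg_re, Complex.mul_re, Complex.ofReal_re,
    Complex.ofReal_im, Complex.zero_re, Complex.zero_im, zero_mul, add_zero]
  rw [← Complex.ofReal_pow, Complex.ofReal_re]
  simp [Complex.ofReal_im]

lemma integrable_gauss_shift {σ2 : ℝ} (hσ : 0 < σ2) (m : E) :
    Integrable (fun x : E => rexp (-‖x - m‖ ^ 2 / (2 * σ2))) := by
  have h := (integrable_gauss (d := d) (b := (2 * σ2)⁻¹) (by positivity)).comp_sub_right m
  refine h.congr (ae_of_all _ fun x => ?_)
  dsimp only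
  congr 1
  field_simp

lemma gauss_mass {σ2 : ℝ} (hσ : 0 < σ2) (m : E) :
    ∫ x : E, rexp (-‖x - m‖ ^ 2 / (2 * σ2)) = (2 * π * σ2) ^ ((d : ℝ) / 2) := by
  rw [integral_sub_right_eq_self (fun y : E => rexp (-‖y‖ ^ 2 / (2 * σ2))) m]
  have he : (fun y : E => rexp (-‖y‖ ^ 2 / (2 * σ2)))
      = fun y : E => rexp (-(2 * σ2)⁻¹ * ‖y‖ ^ 2) := by
    funext y; congr 1; field_simp
  rw [he, GaussianFourier.integral_rexp_neg_mul_sq_norm (by positivity : (0:ℝ) < (2 * σ2)⁻¹)]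
  rw [finrank_euclideanSpace_fin]
  congr 1
  field_simp

lemma gauss_mass' {σ2 : ℝ} (hσ : 0 < σ2) (b : ℝ) (hb : b = (2 * σ2)⁻¹) :
    ∫ x : E, (2 * π * σ2) ^ (-(d : ℝ) / 2) * rexp (-b * ‖x‖ ^ 2) = 1 := by
  subst hb
  rw [integral_const_mul]
  have he : (fun y : E => rexp (-(2 * σ2)⁻¹ * ‖y‖ ^ 2))
      = fun y : E => rexp (-‖y - 0‖ ^ 2 / (2 * σ2)) := by
    funext y; rw [sub_zero]; congr 1; field_simp
  rw [he, gauss_mass hσ 0, ← Real.rpow_add (by positivity)]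
  rw [show -(d:ℝ)/2 + (d:ℝ)/2 = 0 by ring, Real.rpow_zero]

lemma gaussian_univ {σ2 : ℝ} (hσ : 0 < σ2) (m : E) :
    gaussian d m σ2 Set.univ = 1 := by
  rw [gaussian, withDensity_apply _ MeasurableSet.univ, Measure.restrict_univ]
  have hint : Integrable (fun x : E =>
      (2 * π * σ2) ^ (-(d : ℝ) / 2) * rexp (-‖x - m‖ ^ 2 / (2 * σ2))) :=
    (integrable_gauss_shift hσ m).const_mul _
  rw [← ofReal_integral_eq_lintegral_ofReal hint
    (ae_of_all _ fun x => by positivity)]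
  rw [integral_const_mul, gauss_mass hσ m, ← Real.rpow_add (by positivity)]
  rw [show -(d:ℝ)/2 + (d:ℝ)/2 = 0 by ring, Real.rpow_zero, ENNReal.ofReal_one]

lemma gaussian_isProb {σ2 : ℝ} (hσ : 0 < σ2) (m : E) :
    IsProbabilityMeasure (gaussian d m σ2) := ⟨gaussian_univ hσ m⟩

lemma aux_norm_exp (c s : ℝ) (hc : 0 < c) (hs : 0 ≤ s) :
    s * rexp (-(c * s ^ 2)) ≤ 1 + 1 / c := by
  have h1 : c * s ^ 2 + 1 ≤ rexp (c * s ^ 2) := Real.add_one_le_exp _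
  rw [Real.exp_neg, mul_inv_le_iff₀ (Real.exp_pos _)]
  have h5 : (c * s ^ 2 + 1) * (1 + 1 / c) = c * s ^ 2 + 1 + s ^ 2 + 1 / c := by
    field_simp; ring
  have h6 : (c * s ^ 2 + 1) * (1 + 1 / c) ≤ rexp (c * s ^ 2) * (1 + 1 / c) :=
    mul_le_mul_of_nonneg_right h1 (by positivity)
  nlinarith [sq_nonneg (s - 1), mul_nonneg hc.le (sq_nonneg s),
    (by positivity : (0:ℝ) < 1 / c)]

lemma moment_integrable {b : ℝ} (hb : 0 < b) (w : E) :
    Integrable (fun x : E => ⟪x, w⟫ * rexp (-b * ‖x‖ ^ 2)) := by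
  have hg : Integrable (fun x : E => ((1 + 1 / (b / 2)) * ‖w‖) * rexp (-(b / 2) * ‖x‖ ^ 2)) :=
    (integrable_gauss (by positivity)).const_mul _
  refine hg.mono' ?_ (ae_of_all _ fun x => ?_)
  · exact ((continuous_id.inner continuous_const).mul
      (Real.continuous_exp.comp (continuous_const.mul (continuous_norm.pow 2)))).aestronglyMeasurable
  · have key := aux_norm_exp (b / 2) ‖x‖ (by positivity) (norm_nonneg x)
    have hinner : |⟪x, w⟫| ≤ ‖x‖ * ‖w‖ := abs_real_inner_le_norm x w
    have hsplit : rexp (-b * ‖x‖ ^ 2)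
        = rexp (-(b / 2) * ‖x‖ ^ 2) * rexp (-(b / 2) * ‖x‖ ^ 2) := by
      rw [← Real.exp_add]; congr 1; ring
    have hE1 : (0:ℝ) < rexp (-(b / 2) * ‖x‖ ^ 2) := Real.exp_pos _
    rw [Real.norm_eq_abs, abs_mul, abs_of_pos (Real.exp_pos _), hsplit]
    have hkey' : ‖x‖ * rexp (-(b / 2) * ‖x‖ ^ 2) ≤ 1 + 1 / (b / 2) := by
      have : -(b / 2) * ‖x‖ ^ 2 = -(b / 2 * ‖x‖ ^ 2) := by ring
      rw [this]; exact key
    calc |⟪x, w⟫| * (rexp (-(b / 2) * ‖x‖ ^ 2) * rexp (-(b / 2) * ‖x‖ ^ 2))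
        ≤ (‖x‖ * ‖w‖) * (rexp (-(b / 2) * ‖x‖ ^ 2) * rexp (-(b / 2) * ‖x‖ ^ 2)) := by
          apply mul_le_mul_of_nonneg_right hinner (by positivity)
      _ = (‖x‖ * rexp (-(b / 2) * ‖x‖ ^ 2)) * ‖w‖ * rexp (-(b / 2) * ‖x‖ ^ 2) := by ring
      _ ≤ (1 + 1 / (b / 2)) * ‖w‖ * rexp (-(b / 2) * ‖x‖ ^ 2) := by
          apply mul_le_mul_of_nonneg_right _ hE1.le
          exact mul_le_mul_of_nonneg_right hkey' (norm_nonneg w)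

lemma moment_zero {b : ℝ} (hb : 0 < b) (w : E) :
    ∫ x : E, ⟪x, w⟫ * rexp (-b * ‖x‖ ^ 2) = 0 := by
  simp only [neg_mul]
  have h := integral_neg_eq_self (fun x : E => ⟪x, w⟫ * rexp (-b * ‖x‖ ^ 2)) volume
  simp only [inner_neg_left, norm_neg, neg_mul, integral_neg] at h
  linarith

lemma key_integral {σ2 : ℝ} (hσ : 0 < σ2) (m₁ m₂ : E) :
    Integrable (fun x : E => (‖x - m₂‖ ^ 2 - ‖x - m₁‖ ^ 2) / (2 * σ2)) (gaussian d m₁ σ2) ∧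
    ∫ x, (‖x - m₂‖ ^ 2 - ‖x - m₁‖ ^ 2) / (2 * σ2) ∂(gaussian d m₁ σ2)
      = ‖m₁ - m₂‖ ^ 2 / (2 * σ2) := by
  set c : ℝ := (2 * π * σ2) ^ (-(d : ℝ) / 2) with hc
  have hcpos : 0 < c := Real.rpow_pos_of_pos (by positivity) _
  set b : ℝ := (2 * σ2)⁻¹ with hbdef
  have hbpos : 0 < b := by positivity
  set Δ : E := m₁ - m₂ with hΔ
  set ρ : E → ℝ := fun x => c * rexp (-‖x - m₁‖ ^ 2 / (2 * σ2)) with hρ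
  have hρcont : Continuous ρ :=
    continuous_const.mul (Real.continuous_exp.comp
      (((continuous_id.sub continuous_const).norm.pow 2).neg.div_const _))
  have hρnonneg : ∀ x, 0 ≤ ρ x := fun x => by positivity
  have hGdef : gaussian d m₁ σ2 = volume.withDensity fun x => ENNReal.ofReal (ρ x) := rfl
  -- the function F on centered coordinates
  set F : E → ℝ := fun z => ρ (z + m₁) * ((‖z + m₁ - m₂‖ ^ 2 - ‖z + m₁ - m₁‖ ^ 2) / (2 * σ2))
    with hF
  have hFeq : F = fun z : E =>
      (⟪z, Δ⟫ * rexp (-b * ‖z‖ ^ 2)) * (2 * c / (2 * σ2))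
      + (c * rexp (-b * ‖z‖ ^ 2)) * (‖Δ‖ ^ 2 / (2 * σ2)) := by
    funext z
    have h1 : z + m₁ - m₂ = z + Δ := by rw [hΔ]; abel
    have h2 : z + m₁ - m₁ = z := by abel
    have h3 : ρ (z + m₁) = c * rexp (-b * ‖z‖ ^ 2) := by
      simp only [hρ, h2]
      congr 1
      rw [hbdef]; field_simp
    simp only [hF, h1, h2, h3, norm_add_sq_real]
    ring
  have hFint : Integrable F := by
    rw [hFeq]
    exact ((moment_integrable hbpos Δ).mul_const _).add
      (((integrable_gauss hbpos).const_mul c).mul_const _)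
  have hFval : ∫ z, F z = ‖Δ‖ ^ 2 / (2 * σ2) := by
    rw [hFeq, integral_add ((moment_integrable hbpos Δ).mul_const _)
      (((integrable_gauss hbpos).const_mul c).mul_const _),
      integral_mul_const, integral_mul_const, moment_zero hbpos Δ,
      gauss_mass' hσ b hbdef]
    ring
  -- transfer to the Gaussian measure
  have hrw : ∀ g : E → ℝ, Measurable g →
      ∫ x, g x ∂(gaussian d m₁ σ2) = ∫ x, ρ x * g x := by
    intro g hg
    rw [hGdef]
    have : (fun x => ENNReal.ofReal (ρ x)) = fun x => ((ρ x).toNNReal : ℝ≥0∞) := rfl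
    rw [this, integral_withDensity_eq_integral_smul hρcont.measurable.real_toNNReal]
    congr 1 with x
    rw [NNReal.smul_def, Real.coe_toNNReal _ (hρnonneg x), smul_eq_mul]
  have hint : Integrable (fun x : E => (‖x - m₂‖ ^ 2 - ‖x - m₁‖ ^ 2) / (2 * σ2))
      (gaussian d m₁ σ2) := by
    rw [hGdef, integrable_withDensity_iff (by fun_prop) (ae_of_all _ fun x => ENNReal.ofReal_lt_top)]
    have hFc := hFint.comp_sub_right m₁
    refine hFc.congr (ae_of_all _ fun x => ?_)
    simp only [hF, sub_add_cancel]
    rw [ENNReal.toReal_ofReal (hρnonneg x)]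
    ring
  refine ⟨hint, ?_⟩
  rw [hrw _ (by fun_prop)]
  have : ∫ x, ρ x * ((‖x - m₂‖ ^ 2 - ‖x - m₁‖ ^ 2) / (2 * σ2)) = ∫ x, F (x - m₁) := by
    congr 1 with x
    simp only [hF, sub_add_cancel]
  rw [this, integral_sub_right_eq_self F m₁, hFval]


lemma dpi {X Y : Type*} [MeasurableSpace X] [MeasurableSpace Y]
    (Q : Measure X) [IsProbabilityMeasure Q] (r : X → ℝ) (hr : Measurable r)
    (hrpos : ∀ x, 0 < r x)
    (P : Measure X) [IsProbabilityMeasure P]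
    (hP : P = Q.withDensity (fun x => ENNReal.ofReal (r x)))
    (κ : Kernel X Y) [IsMarkovKernel κ]
    (hlog : Integrable (fun x => Real.log (r x)) P)
    (hC : 0 ≤ ∫ x, Real.log (r x) ∂P) :
    KLdiv (P.bind κ) (Q.bind κ) ≤ ∫ x, Real.log (r x) ∂P := by
  have hPQ : P ≪ Q := hP ▸ withDensity_absolutelyContinuous Q _
  set μ := P.bind κ with hμdef
  set ν := Q.bind κ with hνdef
  haveI : IsProbabilityMeasure μ :=
    ⟨by rw [hμdef, Measure.bind_apply MeasurableSet.univ (Kernel.measurable κ).aemeasurable]; simp⟩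
  haveI : IsProbabilityMeasure ν :=
    ⟨by rw [hνdef, Measure.bind_apply MeasurableSet.univ (Kernel.measurable κ).aemeasurable]; simp⟩
  have hμν : μ ≪ ν := by
    refine Measure.AbsolutelyContinuous.mk fun s hs hνs => ?_
    rw [hνdef, Measure.bind_apply hs (Kernel.measurable κ).aemeasurable] at hνs
    have h0 : ∀ᵐ x ∂Q, κ x s = 0 :=
      (lintegral_eq_zero_iff (Kernel.measurable_coe κ hs)).mp hνs
    rw [hμdef, Measure.bind_apply hs (Kernel.measurable κ).aemeasurable]
    rw [lintegral_congr_ae (hPQ.ae_le h0)]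
    simp
  set G := μ.rnDeriv ν with hGdef
  set g := fun y => (G y).toReal with hgdef
  have hg : Measurable g := (Measure.measurable_rnDeriv μ ν).ennreal_toReal
  have hKL : KLdiv μ ν = ∫ y, Real.log (g y) ∂μ := rfl
  by_cases hInt : Integrable (fun y => Real.log (g y)) μ
  swap
  · rw [hKL, integral_undef hInt]; exact hC
  set Pj := P ⊗ₘ κ with hPjdef
  have hsnd : μ = Pj.map Prod.snd := by
    ext s hs
    rw [Measure.map_apply measurable_snd hs,
      Measure.compProd_apply (measurable_snd hs),
      hμdef, Measure.bind_apply hs (Kernel.measurable κ).aemeasurable]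
    rfl
  have hfst : P = Pj.map Prod.fst := by
    rw [← Measure.fst_compProd P κ]; rfl
  -- integrability on the product
  have hint2 : Integrable (fun z : X × Y => Real.log (g z.2)) Pj := by
    rw [hsnd] at hInt
    exact (integrable_map_measure
      (Real.measurable_log.comp hg).aestronglyMeasurable
      measurable_snd.aemeasurable).mp hInt
  have hint1 : Integrable (fun z : X × Y => Real.log (r z.1)) Pj := by
    rw [hfst] at hlog
    exact (integrable_map_measure
      (Real.measurable_log.comp hr).aestronglyMeasurable
      measurable_fst.aemeasurable).mp hlog
  have hKL2 : KLdiv μ ν = ∫ z, Real.log (g z.2) ∂Pj := by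
    rw [hKL, hsnd]
    exact integral_map measurable_snd.aemeasurable
      (Real.measurable_log.comp hg).aestronglyMeasurable
  have hterm1 : ∫ z, Real.log (r z.1) ∂Pj = ∫ x, Real.log (r x) ∂P := by
    rw [hfst]
    exact (integral_map measurable_fst.aemeasurable
      (Real.measurable_log.comp hr).aestronglyMeasurable).symm
  -- key lintegral bound
  have hhmeas : Measurable (fun z : X × Y => g z.2 / r z.1) :=
    (hg.comp measurable_snd).div (hr.comp measurable_fst)
  have L : ∫⁻ z, ENNReal.ofReal (g z.2 / r z.1) ∂Pj ≤ 1 := by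
    rw [hPjdef, Measure.lintegral_compProd hhmeas.ennreal_ofReal]
    have hstep : ∀ x, ∫⁻ y, ENNReal.ofReal (g y / r x) ∂κ x
        = (∫⁻ y, ENNReal.ofReal (g y) ∂κ x) * (ENNReal.ofReal (r x))⁻¹ := by
      intro x
      simp_rw [ENNReal.ofReal_div_of_pos (hrpos x), div_eq_mul_inv]
      exact lintegral_mul_const _ hg.ennreal_ofReal
    simp_rw [hstep]
    have hGk : Measurable (fun x => ∫⁻ y, ENNReal.ofReal (g y) ∂κ x) :=
      Measurable.lintegral_kernel hg.ennreal_ofReal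
    erw [hP, lintegral_withDensity_eq_lintegral_mul Q
      hr.ennreal_ofReal (hGk.mul hr.ennreal_ofReal.inv)]
    have hcancel : ∀ x, ENNReal.ofReal (r x)
        * ((∫⁻ y, ENNReal.ofReal (g y) ∂κ x) * (ENNReal.ofReal (r x))⁻¹)
        = ∫⁻ y, ENNReal.ofReal (g y) ∂κ x := by
      intro x
      rw [mul_comm (∫⁻ y, ENNReal.ofReal (g y) ∂κ x), ← mul_assoc,
        ENNReal.mul_inv_cancel (by simp [hrpos x]) ENNReal.ofReal_ne_top, one_mul]
    simp only [Pi.mul_apply, Pi.inv_apply]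
    rw [lintegral_congr fun x => hcancel x]
    rw [← Measure.lintegral_bind (Kernel.measurable κ).aemeasurable hg.ennreal_ofReal.aemeasurable]
    calc ∫⁻ y, ENNReal.ofReal (g y) ∂ν ≤ ∫⁻ y, G y ∂ν :=
          lintegral_mono fun y => ENNReal.ofReal_toReal_le
      _ = μ Set.univ := Measure.lintegral_rnDeriv hμν
      _ = 1 := measure_univ
  have hint3 : Integrable (fun z : X × Y => g z.2 / r z.1) Pj := by
    refine ⟨hhmeas.aestronglyMeasurable, ?_⟩
    have h0 : 0 ≤ᵐ[Pj] fun z : X × Y => g z.2 / r z.1 :=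
      ae_of_all _ fun z => div_nonneg ENNReal.toReal_nonneg (hrpos z.1).le
    rw [hasFiniteIntegral_iff_ofReal h0]
    exact lt_of_le_of_lt L ENNReal.one_lt_top
  -- pointwise inequality a.e.
  have hgpos : ∀ᵐ y ∂μ, 0 < g y := by
    filter_upwards [Measure.rnDeriv_pos hμν, hμν.ae_le (Measure.rnDeriv_lt_top μ ν)]
      with y h1 h2
    exact ENNReal.toReal_pos h1.ne' h2.ne
  have hgposPj : ∀ᵐ z ∂Pj, 0 < g z.2 := by
    rw [hsnd] at hgpos
    exact (ae_map_iff measurable_snd.aemeasurable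
      (measurableSet_lt measurable_const hg)).mp hgpos
  have haeineq : ∀ᵐ z ∂Pj, Real.log (g z.2) - Real.log (r z.1)
      ≤ g z.2 / r z.1 - 1 := by
    filter_upwards [hgposPj] with z hz
    rw [← Real.log_div hz.ne' (hrpos z.1).ne']
    exact Real.log_le_sub_one_of_pos (div_pos hz (hrpos z.1))
  -- assemble
  have hsplit : ∫ z, (Real.log (g z.2) - Real.log (r z.1)) ∂Pj
      = ∫ z, Real.log (g z.2) ∂Pj - ∫ z, Real.log (r z.1) ∂Pj :=
    integral_sub hint2 hint1
  have hsecond : ∫ z, (Real.log (g z.2) - Real.log (r z.1)) ∂Pj ≤ 0 := by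
    have h1 : ∫ z, (Real.log (g z.2) - Real.log (r z.1)) ∂Pj
        ≤ ∫ z, (g z.2 / r z.1 - 1) ∂Pj :=
      integral_mono_ae (hint2.sub hint1) (hint3.sub (integrable_const 1)) haeineq
    have h2 : ∫ z, (g z.2 / r z.1 - 1) ∂Pj = (∫ z, g z.2 / r z.1 ∂Pj) - 1 := by
      rw [integral_sub hint3 (integrable_const 1), integral_const]
      simp
    have h3 : ∫ z, g z.2 / r z.1 ∂Pj ≤ 1 := by
      have h0 : 0 ≤ᵐ[Pj] fun z : X × Y => g z.2 / r z.1 :=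
        ae_of_all _ fun z => div_nonneg ENNReal.toReal_nonneg (hrpos z.1).le
      rw [integral_eq_lintegral_of_nonneg_ae h0 hhmeas.aestronglyMeasurable]
      calc (∫⁻ z, ENNReal.ofReal (g z.2 / r z.1) ∂Pj).toReal
          ≤ (1 : ℝ≥0∞).toReal := ENNReal.toReal_mono ENNReal.one_ne_top L
        _ = 1 := by simp
    linarith
  rw [hKL2]
  linarith [hsplit, hterm1, hsecond]


lemma gaussian_withDensity {σ2 : ℝ} (hσ : 0 < σ2) (m₁ m₂ : E) :
    gaussian d m₁ σ2 = (gaussian d m₂ σ2).withDensity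
      (fun x => ENNReal.ofReal (rexp ((‖x - m₂‖ ^ 2 - ‖x - m₁‖ ^ 2) / (2 * σ2)))) := by
  rw [gaussian, gaussian, ← withDensity_mul _
    (by fun_prop : Measurable fun x : E => ENNReal.ofReal
      ((2 * π * σ2) ^ (-(d : ℝ) / 2) * rexp (-‖x - m₂‖ ^ 2 / (2 * σ2))))
    (by fun_prop : Measurable fun x : E =>
      ENNReal.ofReal (rexp ((‖x - m₂‖ ^ 2 - ‖x - m₁‖ ^ 2) / (2 * σ2))))]
  congr 1
  funext x
  simp only [Pi.mul_apply]
  rw [← ENNReal.ofReal_mul (by positivity)]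
  congr 1
  rw [mul_assoc ((2 * π * σ2) ^ (-(d : ℝ) / 2)) (rexp (-‖x - m₂‖ ^ 2 / (2 * σ2))),
    ← Real.exp_add]
  congr 2
  ring

theorem stmt8 (d : ℕ) (hd : 1 ≤ d) (β : ℕ → ℝ) (hβ : ∀ t, β t ∈ Set.Ioo (0 : ℝ) 1)
    (ᾱ : ℕ → ℝ) (hᾱ : ∀ T, ᾱ T = ∏ t ∈ Finset.Icc 1 T, (1 - β t))
    (x₀ x₀' : EuclideanSpace ℝ (Fin d)) (hx : x₀ ≠ x₀')
    {Y : Type*} [MeasurableSpace Y]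
    (κ : Kernel (EuclideanSpace ℝ (Fin d)) Y) [IsMarkovKernel κ] :
    (∀ T : ℕ, 1 ≤ T →
      KLdiv ((gaussian d (Real.sqrt (ᾱ T) • x₀) (1 - ᾱ T)).bind κ)
          ((gaussian d (Real.sqrt (ᾱ T) • x₀') (1 - ᾱ T)).bind κ) ≤
        ᾱ T * ‖x₀ - x₀'‖ ^ 2 / (2 * (1 - ᾱ T))) ∧
    StrictAntiOn (fun T : ℕ => ᾱ T * ‖x₀ - x₀'‖ ^ 2 / (2 * (1 - ᾱ T))) (Set.Ici 1) := by
  have hc2 : 0 < ‖x₀ - x₀'‖ ^ 2 := by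
    have h0 : x₀ - x₀' ≠ 0 := sub_ne_zero_of_ne hx
    exact pow_pos (norm_pos_iff.mpr h0) 2
  have hαpos : ∀ T, 0 < ᾱ T := by
    intro T
    rw [hᾱ]
    exact Finset.prod_pos fun t _ => by linarith [(hβ t).2]
  have hstep : ∀ n : ℕ, ᾱ (n + 1) = ᾱ n * (1 - β (n + 1)) := by
    intro n
    rw [hᾱ, hᾱ, Finset.prod_Icc_succ_top (by omega : 1 ≤ n + 1)]
  have hαlt1 : ∀ T, 1 ≤ T → ᾱ T < 1 := by
    intro T hT
    induction T, hT using Nat.le_induction with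
    | base =>
      rw [hᾱ]
      simp only [Finset.Icc_self, Finset.prod_singleton]
      linarith [(hβ 1).1]
    | succ n hn ih =>
      rw [hstep]
      nlinarith [(hβ (n + 1)).1, (hβ (n + 1)).2, hαpos n]
  have hmono : ∀ n : ℕ, 1 ≤ n →
      ᾱ (n + 1) * ‖x₀ - x₀'‖ ^ 2 / (2 * (1 - ᾱ (n + 1)))
        < ᾱ n * ‖x₀ - x₀'‖ ^ 2 / (2 * (1 - ᾱ n)) := by
    intro n hn
    have ha := hαpos n
    have ha1 := hαlt1 n hn
    have hb1 := (hβ (n + 1)).1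
    have hb2 := (hβ (n + 1)).2
    have ha' := hαpos (n + 1)
    have ha'1 := hαlt1 (n + 1) (by omega)
    have hlt : ᾱ (n + 1) < ᾱ n := by
      rw [hstep]
      nlinarith
    rw [div_lt_div_iff₀ (by linarith) (by linarith)]
    nlinarith
  constructor
  · intro T hT
    have hα1 := hαlt1 T hT
    have hα0 := hαpos T
    set σ2 : ℝ := 1 - ᾱ T with hσ2
    have hσ : 0 < σ2 := by simp only [hσ2]; linarith
    set m₁ : EuclideanSpace ℝ (Fin d) := Real.sqrt (ᾱ T) • x₀ with hm₁
    set m₂ : EuclideanSpace ℝ (Fin d) := Real.sqrt (ᾱ T) • x₀' with hm₂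
    have hnorm : ‖m₁ - m₂‖ ^ 2 = ᾱ T * ‖x₀ - x₀'‖ ^ 2 := by
      rw [hm₁, hm₂, ← smul_sub, norm_smul, mul_pow, Real.norm_eq_abs,
        sq_abs, Real.sq_sqrt hα0.le]
    haveI hP : IsProbabilityMeasure (gaussian d m₁ σ2) := gaussian_isProb hσ m₁
    haveI hQ : IsProbabilityMeasure (gaussian d m₂ σ2) := gaussian_isProb hσ m₂
    set r : EuclideanSpace ℝ (Fin d) → ℝ :=
      fun x => rexp ((‖x - m₂‖ ^ 2 - ‖x - m₁‖ ^ 2) / (2 * σ2)) with hr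
    have hrmeas : Measurable r := by
      simp only [hr]; fun_prop
    have hrpos : ∀ x, 0 < r x := fun x => Real.exp_pos _
    obtain ⟨hint, hval⟩ := key_integral hσ m₁ m₂
    have hlogeq : (fun x : EuclideanSpace ℝ (Fin d) => Real.log (r x))
        = fun x => (‖x - m₂‖ ^ 2 - ‖x - m₁‖ ^ 2) / (2 * σ2) := by
      funext x; simp only [hr, Real.log_exp]
    have hlog : Integrable (fun x => Real.log (r x)) (gaussian d m₁ σ2) := by
      rw [hlogeq]; exact hint
    have hlogval : ∫ x, Real.log (r x) ∂(gaussian d m₁ σ2) = ‖m₁ - m₂‖ ^ 2 / (2 * σ2) := by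
      rw [hlogeq]; exact hval
    have hC : 0 ≤ ∫ x, Real.log (r x) ∂(gaussian d m₁ σ2) := by
      rw [hlogval]; positivity
    have hdpi := dpi (gaussian d m₂ σ2) r hrmeas hrpos (gaussian d m₁ σ2)
      (gaussian_withDensity hσ m₁ m₂) κ hlog hC
    calc KLdiv ((gaussian d m₁ σ2).bind κ) ((gaussian d m₂ σ2).bind κ)
        ≤ ∫ x, Real.log (r x) ∂(gaussian d m₁ σ2) := hdpi
      _ = ᾱ T * ‖x₀ - x₀'‖ ^ 2 / (2 * σ2) := by rw [hlogval, hnorm]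
  · intro S hS T hT hST
    simp only [Set.mem_Ici] at hS hT
    have key : ∀ U : ℕ, S + 1 ≤ U →
        ᾱ U * ‖x₀ - x₀'‖ ^ 2 / (2 * (1 - ᾱ U))
          < ᾱ S * ‖x₀ - x₀'‖ ^ 2 / (2 * (1 - ᾱ S)) := by
      intro U hU
      induction U, hU using Nat.le_induction with
      | base => exact hmono S hS
      | succ n hn ih => exact lt_trans (hmono n (by omega)) ih
    exact key T hST
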